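/- (Theorem 6.6, sufficient condition for Hamiltonization after the second reduction, Euclidean case Q̃ = ℝ^n.) Let B be a basic two-form and Ξ̃ a semibasic two-form on ℝ^n × ℝ^n, let H̃: ℝ^n × ℝ^n → ℝ be smooth, and let X̃ be a smooth vector field satisfying Ω(X̃(z), v) − B_z(X̃(z), v) − Ξ̃_z(X̃(z), v) = DH̃(z)[v] for all z and v. Suppose f: ℝ^n → ℝ is smooth, nowhere-vanishing, and satisfies df ∧ Θ = f²·(B + Ψ_{1/f}^*Ξ̃) pointwise, i.e. (df ∧ Θ)_z(u,v) = f(q)²·[B_z(u,v) + (Ψ_{1/f}^*Ξ̃)_z(u,v)] for all z = (q,p) and all u, v. Then the Chaplygin-rescaled vector field X̃_C satisfies Hamilton's equations Ω(X̃_C(z), v) = DH̃_C(z)[v] for all z and v, with H̃_C := H̃ ∘ Ψ_{1/f}; and consequently div(f^{n−1}X̃) = 0 identically, i.e. X̃ preserves the measure f(q)^{n−1} dq dp. -/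

import Mathlib

noncomputable section

open Matrix

/-- Configuration vectors: points of `ℝⁿ`. -/
abbrev Vec (n : ℕ) : Type := Fin n → ℝ

/-- Phase space `ℝⁿ × ℝⁿ`, points `z = (q, p)`. -/
abbrev Phase (n : ℕ) : Type := Vec n × Vec n

/-- Canonical symplectic form `Ω(u,v) = ⟨u_q, v_p⟩ − ⟨u_p, v_q⟩`. -/
def Omega {n : ℕ} (u v : Phase n) : ℝ := u.1 ⬝ᵥ v.2 - u.2 ⬝ᵥ v.1

/-- Liouville one-form `Θ_z(v) = ⟨p, v_q⟩` at `z = (q,p)`. -/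
def Theta {n : ℕ} (z v : Phase n) : ℝ := z.2 ⬝ᵥ v.1

/-- Fiber scaling `Ψ_f(q,p) = (q, f(q)·p)`. -/
def Psi {n : ℕ} (f : Vec n → ℝ) (z : Phase n) : Phase n := (z.1, f z.1 • z.2)

/-- `Ψ_{1/f}`, the inverse of `Ψ_f`. -/
def PsiInv {n : ℕ} (f : Vec n → ℝ) : Phase n → Phase n := Psi fun q => (f q)⁻¹

/-- The Chaplygin-rescaled vector field
`X_C(z) := DΨ_f(Ψ_{1/f}(z))[(1/f(q))·X(Ψ_{1/f}(z))]`. -/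
def ChapRescale {n : ℕ} (f : Vec n → ℝ) (X : Phase n → Phase n) (z : Phase n) : Phase n :=
  fderiv ℝ (Psi f) (PsiInv f z) ((f z.1)⁻¹ • X (PsiInv f z))

/-- The two-form `df ∧ Θ`. -/
def dfTheta {n : ℕ} (f : Vec n → ℝ) (z u v : Phase n) : ℝ :=
  fderiv ℝ f z.1 u.1 * (z.2 ⬝ᵥ v.1) - fderiv ℝ f z.1 v.1 * (z.2 ⬝ᵥ u.1)

/-- Divergence of a vector field: `div Y (z) = trace DY(z)`. -/
def divergence {n : ℕ} (Y : Phase n → Phase n) (z : Phase n) : ℝ :=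
  LinearMap.trace ℝ (Phase n) (fderiv ℝ Y z).toLinearMap

/-- A semibasic two-form on phase space: a smooth assignment `z ↦ Ξ_z` of
alternating bilinear forms whose value depends only on the base components
of its arguments. -/
structure SemibasicTwoForm (n : ℕ) where
  form : Phase n → Phase n → Phase n → ℝ
  smooth : ∀ u v : Phase n, ContDiff ℝ (⊤ : ℕ∞) fun z => form z u v
  alt : ∀ z u v : Phase n, form z u v = - form z v u
  add_left : ∀ (z u u' v : Phase n), form z (u + u') v = form z u v + form z u' v
  smul_left : ∀ (z : Phase n) (c : ℝ) (u v : Phase n), form z (c • u) v = c * form z u v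
  semibasic : ∀ (z u v u' v' : Phase n), u.1 = u'.1 → v.1 = v'.1 → form z u v = form z u' v'

/-- A basic two-form on phase space: a semibasic two-form whose value is moreover
independent of the point's fiber coordinate `p`. -/
structure BasicTwoForm (n : ℕ) extends SemibasicTwoForm n where
  basic : ∀ (q p p' : Vec n) (u v : Phase n), form (q, p) u v = form (q, p') u v

/-- Pullback of a two-form field by `Ψ_{1/f}`. -/
def pullTwoForm {n : ℕ} (f : Vec n → ℝ) (Ξ : Phase n → Phase n → Phase n → ℝ)
    (z u v : Phase n) : ℝ :=
  Ξ (PsiInv f z) (fderiv ℝ (PsiInv f) z u) (fderiv ℝ (PsiInv f) z v)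
namespace Stmt9Aux

open ContinuousLinearMap

variable {n : ℕ}

lemma diffOf {E F : Type*} [NormedAddCommGroup E] [NormedSpace ℝ E]
    [NormedAddCommGroup F] [NormedSpace ℝ F] {g : E → F}
    (hg : ContDiff ℝ (⊤ : ℕ∞) g) : Differentiable ℝ g :=
  hg.differentiable (by simp)

abbrev Dfst (n : ℕ) : Phase n →L[ℝ] Vec n := ContinuousLinearMap.fst ℝ (Vec n) (Vec n)
abbrev Dsnd (n : ℕ) : Phase n →L[ℝ] Vec n := ContinuousLinearMap.snd ℝ (Vec n) (Vec n)
abbrev Pj (n : ℕ) (i : Fin n) : Vec n →L[ℝ] ℝ := ContinuousLinearMap.proj i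

/-- Derivative of the fiber scaling `Psi g`. -/
lemma hasFDerivAt_psi (g : Vec n → ℝ) {g' : Vec n →L[ℝ] ℝ} (z : Phase n)
    (hg : HasFDerivAt g g' z.1) :
    HasFDerivAt (Psi g)
      ((Dfst n).prod (g z.1 • Dsnd n + (g'.comp (Dfst n)).smulRight z.2)) z := by
  have h1 : HasFDerivAt (fun z : Phase n => z.1) (Dfst n) z := hasFDerivAt_fst
  have h2 : HasFDerivAt (fun z : Phase n => g z.1) (g'.comp (Dfst n)) z :=
    hg.comp z hasFDerivAt_fst
  have h3 : HasFDerivAt (fun z : Phase n => z.2) (Dsnd n) z := hasFDerivAt_snd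
  exact h1.prodMk (h2.smul h3)

lemma hasFDerivAt_psiInv (f : Vec n → ℝ) (hf : ContDiff ℝ (⊤ : ℕ∞) f)
    (hf0 : ∀ q, f q ≠ 0) (z : Phase n) :
    HasFDerivAt (PsiInv f)
      ((Dfst n).prod ((f z.1)⁻¹ • Dsnd n +
        (((-((f z.1) ^ 2)⁻¹) • (fderiv ℝ f z.1)).comp (Dfst n)).smulRight z.2)) z := by
  have hfd : HasFDerivAt f (fderiv ℝ f z.1) z.1 :=
    ((diffOf hf) z.1).hasFDerivAt
  have hinv : HasFDerivAt (fun q => (f q)⁻¹) ((-((f z.1) ^ 2)⁻¹) • (fderiv ℝ f z.1)) z.1 := by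
    have := (hasDerivAt_inv (hf0 z.1)).comp_hasFDerivAt z.1 hfd
    exact this
  exact hasFDerivAt_psi _ z hinv

lemma fderiv_psiInv_apply (f : Vec n → ℝ) (hf : ContDiff ℝ (⊤ : ℕ∞) f)
    (hf0 : ∀ q, f q ≠ 0) (z v : Phase n) :
    fderiv ℝ (PsiInv f) z v =
      (v.1, (f z.1)⁻¹ • v.2 + (-((f z.1) ^ 2)⁻¹ * fderiv ℝ f z.1 v.1) • z.2) := by
  rw [(hasFDerivAt_psiInv f hf hf0 z).fderiv]
  simp [ContinuousLinearMap.prod_apply]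

lemma psiInv_fst (f : Vec n → ℝ) (z : Phase n) : (PsiInv f z).1 = z.1 := rfl

lemma psi_psiInv (f : Vec n → ℝ) (hf0 : ∀ q, f q ≠ 0) (z : Phase n) :
    Psi f (PsiInv f z) = z := by
  simp [Psi, PsiInv, smul_smul, mul_inv_cancel₀ (hf0 z.1)]

lemma psiInv_psi (f : Vec n → ℝ) (hf0 : ∀ q, f q ≠ 0) (z : Phase n) :
    PsiInv f (Psi f z) = z := by
  simp [Psi, PsiInv, smul_smul, inv_mul_cancel₀ (hf0 z.1)]

/-- Explicit formula for the Chaplygin rescaled field. -/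
lemma chapRescale_eq (f : Vec n → ℝ) (hf : ContDiff ℝ (⊤ : ℕ∞) f)
    (hf0 : ∀ q, f q ≠ 0) (X : Phase n → Phase n) (z : Phase n) :
    ChapRescale f X z =
      ((f z.1)⁻¹ • (X (PsiInv f z)).1,
        (X (PsiInv f z)).2 +
          ((f z.1)⁻¹ * ((f z.1)⁻¹ * fderiv ℝ f z.1 (X (PsiInv f z)).1)) • z.2) := by
  set w := PsiInv f z with hw
  have hw1 : w.1 = z.1 := rfl
  have hfd : HasFDerivAt f (fderiv ℝ f w.1) w.1 :=
    ((diffOf hf) w.1).hasFDerivAt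
  have h := (hasFDerivAt_psi f w hfd).fderiv
  rw [ChapRescale, ← hw, h]
  have hw2 : w.2 = (f z.1)⁻¹ • z.2 := rfl
  ext i
  · simp [ContinuousLinearMap.prod_apply, hw1]
  · simp only [ContinuousLinearMap.prod_apply, ContinuousLinearMap.add_apply,
      ContinuousLinearMap.smul_apply, ContinuousLinearMap.coe_comp', Function.comp_apply,
      ContinuousLinearMap.smulRight_apply, ContinuousLinearMap.coe_fst',
      ContinuousLinearMap.coe_snd', hw1, hw2]
    simp only [Prod.smul_fst, Prod.smul_snd, _root_.map_smul, smul_eq_mul]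
    simp only [Pi.add_apply, Pi.smul_apply, smul_eq_mul]
    field_simp
    rw [add_div, mul_div_cancel_left₀ _ (pow_ne_zero 2 (hf0 z.1))]

lemma semibasic_zero_right (Ξ : SemibasicTwoForm n) (z u v : Phase n) (hv : v.1 = 0) :
    Ξ.form z u v = 0 := by
  have h1 : Ξ.form z u v = Ξ.form z u 0 := Ξ.semibasic z u v u 0 rfl (by simp [hv])
  have h3 : Ξ.form z 0 u = 0 := by
    have := Ξ.smul_left z 0 0 u
    simpa using this
  rw [h1, Ξ.alt z u 0, h3, neg_zero]

end Stmt9Aux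
namespace Stmt9Aux

variable {n : ℕ}

lemma divergence_eq (Y : Phase n → Phase n) (z : Phase n) :
    divergence Y z = (∑ i, (fderiv ℝ Y z (Pi.single i 1, 0)).1 i)
      + ∑ i, (fderiv ℝ Y z (0, Pi.single i 1)).2 i := by
  classical
  set b := (Pi.basisFun ℝ (Fin n)).prod (Pi.basisFun ℝ (Fin n)) with hb
  rw [divergence, LinearMap.trace_eq_matrix_trace ℝ b, Matrix.trace]
  rw [Fintype.sum_sum_type]
  congr 1
  · refine Finset.sum_congr rfl fun i _ => ?_
    have hbi : b (Sum.inl i) = ((Pi.single i 1 : Vec n), (0 : Vec n)) := by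
      ext1
      · rw [hb, Module.Basis.prod_apply_inl_fst, Pi.basisFun_apply]
      · rw [hb, Module.Basis.prod_apply_inl_snd]
    rw [Matrix.diag_apply, LinearMap.toMatrix_apply, hbi, hb, Module.Basis.prod_repr_inl,
      Pi.basisFun_repr]
    rfl
  · refine Finset.sum_congr rfl fun i _ => ?_
    have hbi : b (Sum.inr i) = ((0 : Vec n), (Pi.single i 1 : Vec n)) := by
      ext1
      · rw [hb, Module.Basis.prod_apply_inr_fst]
      · rw [hb, Module.Basis.prod_apply_inr_snd, Pi.basisFun_apply]
    rw [Matrix.diag_apply, LinearMap.toMatrix_apply, hbi, hb, Module.Basis.prod_repr_inr,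
      Pi.basisFun_repr]
    rfl

end Stmt9Aux

open Stmt9Aux in
theorem statement9 (n : ℕ) (hn : 1 ≤ n) (B : BasicTwoForm n) (Ξt : SemibasicTwoForm n)
    (Ht : Phase n → ℝ) (Xt : Phase n → Phase n) (f : Vec n → ℝ)
    (hHt : ContDiff ℝ (⊤ : ℕ∞) Ht) (hXt : ContDiff ℝ (⊤ : ℕ∞) Xt)
    (hf : ContDiff ℝ (⊤ : ℕ∞) f) (hf0 : ∀ q, f q ≠ 0)
    (heq : ∀ (z v : Phase n),
      Omega (Xt z) v - B.form z (Xt z) v - Ξt.form z (Xt z) v = fderiv ℝ Ht z v)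
    (hsuff : ∀ (z u v : Phase n),
      dfTheta f z u v = (f z.1) ^ 2 * (B.form z u v + pullTwoForm f Ξt.form z u v)) :
    (∀ (z v : Phase n),
        Omega (ChapRescale f Xt z) v = fderiv ℝ (fun w => Ht (PsiInv f w)) z v)
      ∧ (∀ z : Phase n, divergence (fun w => f w.1 ^ (n - 1) • Xt w) z = 0) := by
  constructor
  · intro z v
    have hgq : f z.1 ≠ 0 := hf0 z.1
    set w := PsiInv f z with hw
    have hw1 : w.1 = z.1 := rfl
    set v' := fderiv ℝ (PsiInv f) z v with hv'
    have hv'eq : v' = (v.1, (f z.1)⁻¹ • v.2 + (-((f z.1) ^ 2)⁻¹ * fderiv ℝ f z.1 v.1) • z.2) :=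
      fderiv_psiInv_apply f hf hf0 z v
    -- chain rule for the right-hand side
    have hRHS : fderiv ℝ (fun w => Ht (PsiInv f w)) z v = fderiv ℝ Ht w v' := by
      have hcomp : HasFDerivAt (fun w => Ht (PsiInv f w))
          ((fderiv ℝ Ht w).comp (fderiv ℝ (PsiInv f) z)) z := by
        have h1 := hasFDerivAt_psiInv f hf hf0 z
        have h2 := ((diffOf hHt) w).hasFDerivAt
        have := h2.comp z h1
        rw [← h1.fderiv] at this
        exact this
      rw [hcomp.fderiv]
      rfl
    rw [hRHS, ← heq w v']
    -- identify the B and Ξ terms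
    set u : Phase n := ((Xt w).1, 0) with hu
    have hv'1 : v'.1 = v.1 := by rw [hv'eq]
    have hB : B.form z u v = B.form w (Xt w) v' := by
      have h1 : B.form (z.1, z.2) u v = B.form (z.1, w.2) u v := B.basic z.1 z.2 w.2 u v
      have h2 : B.form w u v = B.form w (Xt w) v' :=
        B.semibasic w u v (Xt w) v' rfl hv'1.symm
      exact h1.trans h2
    have hΞ : pullTwoForm f Ξt.form z u v = Ξt.form w (Xt w) v' := by
      rw [pullTwoForm, ← hw, ← hv']
      refine Ξt.semibasic w _ _ (Xt w) v' ?_ ?_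
      · rw [fderiv_psiInv_apply f hf hf0 z u]
      · rfl
    have hkey := hsuff z u v
    rw [hB, hΞ] at hkey
    -- now pure algebra
    have hXC := chapRescale_eq f hf hf0 Xt z
    rw [← hw] at hXC
    have hBXi : B.form w (Xt w) v' + Ξt.form w (Xt w) v' =
        ((f z.1) ^ 2)⁻¹ * dfTheta f z u v := by
      rw [hkey]
      field_simp
    rw [hXC]
    have hsub : Omega (Xt w) v' - B.form w (Xt w) v' - Ξt.form w (Xt w) v'
        = Omega (Xt w) v' - ((f z.1 ^ 2)⁻¹ * dfTheta f z u v) := by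
      rw [← hBXi]; ring
    rw [hsub, hv'eq, Omega, Omega, dfTheta]
    simp only [hu]
    simp only [add_dotProduct, smul_dotProduct, dotProduct_add, dotProduct_smul, smul_eq_mul,
      dotProduct_comm z.2 v.1, dotProduct_comm z.2 (Xt w).1]
    field_simp
    ring
  · intro z
    classical
    have hXd : Differentiable ℝ Xt := diffOf hXt
    have hfd : Differentiable ℝ f := diffOf hf
    have htop : ((⊤ : ℕ∞) : WithTop ℕ∞) + 1 ≤ ((⊤ : ℕ∞) : WithTop ℕ∞) := by
      exact_mod_cast le_top
    -- Step A : B + Ξ = f⁻¹ · (df ∧ Θ)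
    have hBXi : ∀ (z₀ u v : Phase n),
        B.form z₀ u v + Ξt.form z₀ u v = (f z₀.1)⁻¹ * dfTheta f z₀ u v := by
      intro z₀ u v
      have h := hsuff (Psi f z₀) (u.1, (0 : Vec n)) (v.1, (0 : Vec n))
      have h1 : PsiInv f (Psi f z₀) = z₀ := psiInv_psi f hf0 z₀
      have hdf : dfTheta f (Psi f z₀) (u.1, (0 : Vec n)) (v.1, (0 : Vec n))
          = f z₀.1 * dfTheta f z₀ u v := by
        simp only [dfTheta, Psi, smul_dotProduct, smul_eq_mul]
        ring
      have hBeq : B.form (Psi f z₀) (u.1, (0 : Vec n)) (v.1, (0 : Vec n)) = B.form z₀ u v := by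
        have h2 : B.form (z₀.1, f z₀.1 • z₀.2) (u.1, (0 : Vec n)) (v.1, (0 : Vec n))
            = B.form (z₀.1, z₀.2) (u.1, (0 : Vec n)) (v.1, (0 : Vec n)) := B.basic _ _ _ _ _
        have h3 : B.form z₀ (u.1, (0 : Vec n)) (v.1, (0 : Vec n)) = B.form z₀ u v :=
          B.semibasic _ _ _ _ _ rfl rfl
        exact h2.trans h3
      have hΞeq : pullTwoForm f Ξt.form (Psi f z₀) (u.1, (0 : Vec n)) (v.1, (0 : Vec n))
          = Ξt.form z₀ u v := by
        rw [pullTwoForm, h1]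
        refine Ξt.semibasic _ _ _ u v ?_ ?_
        · rw [fderiv_psiInv_apply f hf hf0]
        · rw [fderiv_psiInv_apply f hf hf0]
      rw [hdf, hBeq, hΞeq] at h
      have hz1 : (Psi f z₀).1 = z₀.1 := rfl
      rw [hz1] at h
      have hg := hf0 z₀.1
      have h2 : dfTheta f z₀ u v = f z₀.1 * (B.form z₀ u v + Ξt.form z₀ u v) := by
        rw [pow_two, mul_assoc] at h
        exact mul_left_cancel₀ hg h
      rw [h2, ← mul_assoc, inv_mul_cancel₀ hg, one_mul]
    -- Step B : first components of the vector field
    have hA : ∀ (w : Phase n) (i : Fin n),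
        (Xt w).1 i = fderiv ℝ Ht w ((0 : Vec n), Pi.single i 1) := by
      intro w i
      have h := heq w ((0 : Vec n), Pi.single i 1)
      have hB0 : B.form w (Xt w) ((0 : Vec n), Pi.single i 1) = 0 :=
        semibasic_zero_right B.toSemibasicTwoForm w (Xt w) _ rfl
      have hΞ0 : Ξt.form w (Xt w) ((0 : Vec n), Pi.single i 1) = 0 :=
        semibasic_zero_right Ξt w (Xt w) _ rfl
      rw [hB0, hΞ0, Omega] at h
      simpa using h
    -- Step C : second components of the vector field
    have hb : ∀ (w : Phase n) (i : Fin n),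
        (Xt w).2 i = -fderiv ℝ Ht w (Pi.single i 1, (0 : Vec n))
          - (f w.1)⁻¹ * (fderiv ℝ f w.1 ((Xt w).1) * w.2 i
            - fderiv ℝ f w.1 (Pi.single i 1) * (w.2 ⬝ᵥ (Xt w).1)) := by
      intro w i
      have h := heq w (Pi.single i 1, (0 : Vec n))
      have hsum := hBXi w (Xt w) (Pi.single i 1, (0 : Vec n))
      rw [Omega] at h
      simp only [dotProduct_zero, dotProduct_single, mul_one] at h
      have hdf : dfTheta f w (Xt w) (Pi.single i 1, (0 : Vec n))
          = fderiv ℝ f w.1 ((Xt w).1) * w.2 i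
            - fderiv ℝ f w.1 (Pi.single i 1) * (w.2 ⬝ᵥ (Xt w).1) := by
        simp [dfTheta, dotProduct_single]
      rw [hdf] at hsum
      linarith [h, hsum]
    -- notation
    set g := f z.1 with hgdef
    have hg0 : g ≠ 0 := hf0 z.1
    set cc := fderiv ℝ f z.1 with hcc
    set D2f := fderiv ℝ (fderiv ℝ f) z.1 with hD2f
    set DX := fderiv ℝ Xt z with hDXdef
    set D2H := fderiv ℝ (fderiv ℝ Ht) z with hD2Hdef
    set a := (Xt z).1 with ha
    have hdHt : Differentiable ℝ (fderiv ℝ Ht) := diffOf (hHt.fderiv_right htop)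
    have hdf' : Differentiable ℝ (fderiv ℝ f) := diffOf (hf.fderiv_right htop)
    have hsym : ∀ u v : Phase n, D2H u v = D2H v u := by
      have h := (hHt.contDiffAt (x := z)).isSymmSndFDerivAt (by rw [minSmoothness_of_isRCLikeNormedField]; exact WithTop.coe_le_coe.2 le_top)
      intro u v
      rw [hD2Hdef]
      exact h u v
    have hD2 : HasFDerivAt (fderiv ℝ Ht) D2H z := (hdHt z).hasFDerivAt
    have hsnd : ∀ v₀ : Phase n,
        HasFDerivAt (fun w => fderiv ℝ Ht w v₀) (D2H.flip v₀) z := by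
      intro v₀
      have h := hD2.clm_apply (hasFDerivAt_const v₀ z)
      simpa using h
    have hcf : HasFDerivAt (fun w : Phase n => fderiv ℝ f w.1) (D2f.comp (Dfst n)) z :=
      (hdf' z.1).hasFDerivAt.comp z hasFDerivAt_fst
    have hfq : HasFDerivAt (fun w : Phase n => f w.1) (cc.comp (Dfst n)) z :=
      (hfd z.1).hasFDerivAt.comp z hasFDerivAt_fst
    have hXfst : HasFDerivAt (fun w : Phase n => (Xt w).1) ((Dfst n).comp DX) z :=
      (Dfst n).hasFDerivAt.comp z (hXd z).hasFDerivAt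
    have hXcomp1 : ∀ i : Fin n, HasFDerivAt (fun w : Phase n => (Xt w).1 i)
        ((Pj n i).comp ((Dfst n).comp DX)) z := fun i =>
      (Pj n i).hasFDerivAt.comp z hXfst
    have hXcomp2 : ∀ i : Fin n, HasFDerivAt (fun w : Phase n => (Xt w).2 i)
        ((Pj n i).comp ((Dsnd n).comp DX)) z := fun i =>
      (Pj n i).hasFDerivAt.comp z
        ((Dsnd n).hasFDerivAt.comp z (hXd z).hasFDerivAt)
    -- mixed second derivatives of H compute the p-derivatives of the first components
    have hM : ∀ (i : Fin n) (d : Phase n),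
        (DX d).1 i = D2H d ((0 : Vec n), Pi.single i 1) := by
      intro i d
      have hfe : (fun w : Phase n => (Xt w).1 i)
          = (fun w => fderiv ℝ Ht w ((0 : Vec n), Pi.single i 1)) :=
        funext fun w => hA w i
      have h2 : HasFDerivAt (fun w : Phase n => (Xt w).1 i)
          (D2H.flip ((0 : Vec n), Pi.single i 1)) z := by
        rw [hfe]; exact hsnd _
      have h3 := (hXcomp1 i).unique h2
      simpa using ContinuousLinearMap.ext_iff.1 h3 d
    -- p-derivative of the second components, via the explicit formula hb
    have hN : ∀ i : Fin n, (DX ((0 : Vec n), Pi.single i 1)).2 i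
        = -D2H ((0 : Vec n), Pi.single i 1) (Pi.single i 1, (0 : Vec n))
          - g⁻¹ * (cc a + z.2 i * cc ((DX ((0 : Vec n), Pi.single i 1)).1)
              - cc (Pi.single i 1)
                * (z.2 ⬝ᵥ (DX ((0 : Vec n), Pi.single i 1)).1 + a i)) := by
      intro i
      have hG1 : HasFDerivAt (fun w : Phase n => fderiv ℝ Ht w (Pi.single i 1, (0 : Vec n)))
          (D2H.flip (Pi.single i 1, (0 : Vec n))) z := hsnd _
      have hG2 : HasFDerivAt (fun w : Phase n => (f w.1)⁻¹)
          (-((g ^ 2)⁻¹ • (cc.comp (Dfst n)))) z := by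
        have := (hasDerivAt_inv hg0).comp_hasFDerivAt z hfq
        simpa [Function.comp_def] using this
      have hG3 : HasFDerivAt (fun w : Phase n => fderiv ℝ f w.1 ((Xt w).1))
          (cc.comp ((Dfst n).comp DX) + (D2f.comp (Dfst n)).flip a) z := hcf.clm_apply hXfst
      have hG4 : HasFDerivAt (fun w : Phase n => w.2 i) ((Pj n i).comp (Dsnd n)) z :=
        (Pj n i).hasFDerivAt.comp z (Dsnd n).hasFDerivAt
      have hG5 : HasFDerivAt (fun w : Phase n => fderiv ℝ f w.1 (Pi.single i 1))
          ((D2f.comp (Dfst n)).flip (Pi.single i 1)) z := by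
        have := hcf.clm_apply (hasFDerivAt_const (Pi.single i 1 : Vec n) z)
        simpa using this
      have hw2 : ∀ j : Fin n, HasFDerivAt (fun w : Phase n => w.2 j)
          ((Pj n j).comp (Dsnd n)) z := fun j =>
        (Pj n j).hasFDerivAt.comp z (Dsnd n).hasFDerivAt
      have hG6 : HasFDerivAt (fun w : Phase n => w.2 ⬝ᵥ (Xt w).1)
          (∑ j, (z.2 j • ((Pj n j).comp ((Dfst n).comp DX))
            + (Xt z).1 j • ((Pj n j).comp (Dsnd n)))) z := by
        have h := HasFDerivAt.fun_sum (fun j (_ : j ∈ Finset.univ) =>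
          (hw2 j).mul (hXcomp1 j))
        have hfe : (fun w : Phase n => w.2 ⬝ᵥ (Xt w).1)
            = (fun w : Phase n => ∑ j ∈ Finset.univ, w.2 j * (Xt w).1 j) := by
          funext w
          rfl
        rw [hfe]
        exact h
      have hrhs := (hG1.neg).sub (hG2.mul ((hG3.mul hG4).sub (hG5.mul hG6)))
      have e1 : (DX ((0 : Vec n), Pi.single i 1)).2 i
          = fderiv ℝ (fun w : Phase n => (Xt w).2 i) z ((0 : Vec n), Pi.single i 1) := by
        rw [(hXcomp2 i).fderiv]
        rfl
      have hfe2 : (fun w : Phase n => (Xt w).2 i)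
          = (fun w : Phase n => -fderiv ℝ Ht w (Pi.single i 1, (0 : Vec n))
            - (f w.1)⁻¹ * (fderiv ℝ f w.1 ((Xt w).1) * w.2 i
              - fderiv ℝ f w.1 (Pi.single i 1) * (w.2 ⬝ᵥ (Xt w).1))) :=
        funext fun w => hb w i
      have e2 : fderiv ℝ (fun w : Phase n => -fderiv ℝ Ht w (Pi.single i 1, (0 : Vec n))
            - (f w.1)⁻¹ * (fderiv ℝ f w.1 ((Xt w).1) * w.2 i
              - fderiv ℝ f w.1 (Pi.single i 1) * (w.2 ⬝ᵥ (Xt w).1))) z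
          = _ := hrhs.fderiv
      rw [e1, hfe2, e2]
      simp only [ContinuousLinearMap.sub_apply, ContinuousLinearMap.add_apply,
        ContinuousLinearMap.neg_apply, ContinuousLinearMap.smul_apply,
        ContinuousLinearMap.coe_comp', Function.comp_apply, ContinuousLinearMap.flip_apply,
        ContinuousLinearMap.coe_fst', ContinuousLinearMap.coe_snd',
        ContinuousLinearMap.coe_sum', Finset.sum_apply, Pi.add_apply, Pi.smul_apply,
        smul_eq_mul, ContinuousLinearMap.proj_apply, map_zero, mul_zero, zero_mul,
        add_zero, zero_add, neg_zero]
      simp only [ContinuousLinearMap.zero_apply, Pi.single_eq_same, mul_one, mul_zero,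
        add_zero, zero_mul]
      rw [← hcc, ← ha, ← hgdef, Finset.sum_add_distrib]
      have h1 : ∑ x, z.2 x * (DX ((0 : Vec n), Pi.single i 1)).1 x
          = z.2 ⬝ᵥ (DX ((0 : Vec n), Pi.single i 1)).1 := rfl
      have h2 : ∑ x, a x * (Pi.single i 1 : Vec n) x = a i := by
        simp [Pi.single_apply]
      rw [h1, h2]
    -- derivative of the rescaled field
    have hpow : HasFDerivAt (fun w : Phase n => f w.1 ^ (n - 1))
        ((((n - 1 : ℕ) : ℝ) * g ^ (n - 1 - 1)) • (cc.comp (Dfst n))) z := by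
      have := (hasDerivAt_pow (n - 1) g).comp_hasFDerivAt z hfq
      simpa [Function.comp_def] using this
    have hYd := hpow.smul (hXd z).hasFDerivAt
    have hfderivY : fderiv ℝ (fun w : Phase n => f w.1 ^ (n - 1) • Xt w) z = _ := hYd.fderiv
    rw [divergence_eq, hfderivY]
    simp only [ContinuousLinearMap.add_apply, ContinuousLinearMap.smul_apply,
      ContinuousLinearMap.smulRight_apply, ContinuousLinearMap.coe_comp', Function.comp_apply,
      ContinuousLinearMap.coe_fst', Prod.fst_add, Prod.snd_add, Prod.smul_fst, Prod.smul_snd,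
      Pi.add_apply, Pi.smul_apply, smul_eq_mul, map_zero, zero_mul, mul_zero, add_zero, zero_add]
    rw [← hDXdef, ← hgdef, ← ha]
    set gg := g ^ (n - 1) * g⁻¹ with hgg
    have key1 : ∀ x : Fin n,
        g ^ (n - 1) * (DX ((Pi.single x 1 : Vec n), (0 : Vec n))).1 x
          + ((n - 1 : ℕ) : ℝ) * g ^ (n - 1 - 1) * cc (Pi.single x 1) * a x
        = g ^ (n - 1) * D2H ((Pi.single x 1 : Vec n), (0 : Vec n)) ((0 : Vec n), Pi.single x 1)
          + ((n - 1 : ℕ) : ℝ) * g ^ (n - 1 - 1) * (cc (Pi.single x 1) * a x) := by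
      intro x
      rw [hM x ((Pi.single x 1 : Vec n), (0 : Vec n))]
      ring
    have key2 : ∀ x : Fin n,
        g ^ (n - 1) * (DX ((0 : Vec n), Pi.single x 1)).2 x
        = -(g ^ (n - 1) * D2H ((Pi.single x 1 : Vec n), (0 : Vec n)) ((0 : Vec n), Pi.single x 1))
          - gg * cc a - gg * (z.2 x * cc ((DX ((0 : Vec n), Pi.single x 1)).1))
          + gg * (cc (Pi.single x 1) * (z.2 ⬝ᵥ (DX ((0 : Vec n), Pi.single x 1)).1))
          + gg * (cc (Pi.single x 1) * a x) := by
      intro x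
      rw [hN x, hsym ((0 : Vec n), Pi.single x 1) ((Pi.single x 1 : Vec n), (0 : Vec n)), hgg]
      ring
    rw [Finset.sum_congr rfl fun x _ => key1 x, Finset.sum_congr rfl fun x _ => key2 x]
    -- expansion of the linear form cc over the standard basis
    have hvecexp : ∀ v : Vec n, v = ∑ j, v j • (Pi.single j 1 : Vec n) := by
      intro v
      funext k
      simp [Pi.single_apply]
    have hccexp : ∀ v : Vec n, cc v = ∑ j, v j * cc (Pi.single j 1) := by
      intro v
      conv_lhs => rw [hvecexp v]
      rw [map_sum]
      simp [smul_eq_mul]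
    have hS1 : ∑ x, cc (Pi.single x 1) * a x = cc a := by
      rw [hccexp a]
      exact Finset.sum_congr rfl fun x _ => mul_comm _ _
    have hS23 : ∑ x, z.2 x * cc ((DX ((0 : Vec n), Pi.single x 1)).1)
        = ∑ x, cc (Pi.single x 1) * (z.2 ⬝ᵥ (DX ((0 : Vec n), Pi.single x 1)).1) := by
      have lhs_eq : ∀ x : Fin n, z.2 x * cc ((DX ((0 : Vec n), Pi.single x 1)).1)
          = ∑ j, z.2 x * cc (Pi.single j 1)
              * D2H ((0 : Vec n), Pi.single x 1) ((0 : Vec n), Pi.single j 1) := by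
        intro x
        rw [hccexp ((DX ((0 : Vec n), Pi.single x 1)).1), Finset.mul_sum]
        refine Finset.sum_congr rfl fun j _ => ?_
        rw [hM j ((0 : Vec n), Pi.single x 1)]
        ring
      have rhs_eq : ∀ x : Fin n, cc (Pi.single x 1) * (z.2 ⬝ᵥ (DX ((0 : Vec n), Pi.single x 1)).1)
          = ∑ j, z.2 j * cc (Pi.single x 1)
              * D2H ((0 : Vec n), Pi.single j 1) ((0 : Vec n), Pi.single x 1) := by
        intro x
        have hdot : z.2 ⬝ᵥ (DX ((0 : Vec n), Pi.single x 1)).1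
            = ∑ j, z.2 j * (DX ((0 : Vec n), Pi.single x 1)).1 j := rfl
        rw [hdot, Finset.mul_sum]
        refine Finset.sum_congr rfl fun j _ => ?_
        rw [hM j ((0 : Vec n), Pi.single x 1),
          hsym ((0 : Vec n), Pi.single x 1) ((0 : Vec n), Pi.single j 1)]
        ring
      rw [Finset.sum_congr rfl fun x _ => lhs_eq x, Finset.sum_congr rfl fun x _ => rhs_eq x,
        Finset.sum_comm]
    have hnum : (((n - 1 : ℕ) : ℝ)) * g ^ (n - 1 - 1) = ((n : ℝ) - 1) * gg := by
      rw [hgg]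
      obtain ⟨m, rfl⟩ : ∃ m, n = m + 1 := ⟨n - 1, (Nat.succ_pred_eq_of_pos hn).symm⟩
      cases m with
      | zero => simp
      | succ k =>
        push_cast [Nat.add_sub_cancel]
        rw [pow_succ, mul_assoc, mul_inv_cancel₀ hg0, mul_one]
        ring
    -- split the sums and conclude
    simp only [Finset.sum_add_distrib, Finset.sum_sub_distrib, Finset.sum_neg_distrib,
      ← Finset.mul_sum, Finset.sum_const, Finset.card_univ, Fintype.card_fin, nsmul_eq_mul]
    rw [hS1, hS23, hnum]
    ring
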